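/- For reals 0 < V_S < V_M < V_L, in the 4-asset, 3-scenario DSHP instance with k = 1, first-stage values (V_S, V_M, V_S, V_S) and second-stage value matrix f where f_{1,1} = f_{3,2} = f_{4,3} = V_L and all other entries equal V_S, with equal scenario probabilities 1/3: the optimal revenue equals V_L (sell the most expensive asset in each scenario at stage 2), while any solution selling one asset at the first stage achieves revenue at most V_M; hence the ratio V_M/V_L is attained. -/
import Mathlib


theorem tight_example (VS VM VL : ℝ) (h0 : 0 < VS) (h1 : VS < VM) (h2 : VM < VL)
    (c : Fin 4 → ℝ) (hc : c = ![VS, VM, VS, VS])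
    (f : Fin 4 → Fin 3 → ℝ)
    (hf : f = ![![VL, VS, VS], ![VS, VS, VS], ![VS, VL, VS], ![VS, VS, VL]]) :
    (∑ j : Fin 3, (1 / 3 : ℝ) * f (![0, 2, 3] j) j = VL) ∧
    (c 1 = VM) ∧
    (∀ sel : Fin 3 → Fin 4, ∑ j : Fin 3, (1 / 3 : ℝ) * f (sel j) j ≤ VL) ∧
    (∀ i : Fin 4, c i ≤ VL) ∧
    (∀ i : Fin 4, c i ≤ VM) := by
  subst hc hf
  refine ⟨by simp [Fin.sum_univ_three]; ring, by simp, ?_, ?_, ?_⟩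
  · intro sel
    have h : ∀ i j, (![![VL, VS, VS], ![VS, VS, VS], ![VS, VL, VS], ![VS, VS, VL]] : Fin 4 → Fin 3 → ℝ) i j ≤ VL := by
      intro i j; fin_cases i <;> fin_cases j <;> simp [Matrix.vecHead, Matrix.vecTail] <;> linarith
    calc ∑ j : Fin 3, (1 / 3 : ℝ) * _ ≤ ∑ j : Fin 3, (1 / 3 : ℝ) * VL := by
          apply Finset.sum_le_sum; intro j _
          exact mul_le_mul_of_nonneg_left (h (sel j) j) (by norm_num)
      _ = VL := by rw [Fin.sum_univ_three]; ring
  · intro i; fin_cases i <;> simp <;> linarith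
  · intro i; fin_cases i <;> simp <;> linarith
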